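/- Let F₂ be the free group on two generators g₁, g₂ and let ℓ²(F₂) be the Hilbert space of square-summable complex-valued functions on F₂. For g ∈ F₂ let L_g and R_g be the left and right translation unitaries on ℓ²(F₂), given by (L_g ξ)(h) = ξ(g⁻¹h) and (R_g ξ)(h) = ξ(hg). Then the bounded operator T₂ := 1 + L_{g₁}R_{g₂} + L_{g₁⁻¹}R_{g₂⁻¹} + L_{g₂}R_{g₁} on ℓ²(F₂) has operator norm at most 4 − 1/784. -/

import Mathlib

open scoped ENNReal

noncomputable section

/-- The free group `F₂` on two generators. -/
abbrev F₂ : Type := FreeGroup (Fin 2)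

/-- The first generator `g₁` of `F₂`. -/
def g₁ : F₂ := FreeGroup.of 0

/-- The second generator `g₂` of `F₂`. -/
def g₂ : F₂ := FreeGroup.of 1

/-- The Hilbert space `ℓ²(F₂)` of square-summable complex functions on `F₂`. -/
abbrev l2F₂ := lp (fun _ : F₂ => ℂ) 2

lemma memℓp_comp_equiv {α β : Type*} {f : β → ℂ} (e : α ≃ β) (hf : Memℓp f 2) :
    Memℓp (fun a => f (e a)) 2 := by
  apply memℓp_gen
  exact (e.summable_iff (f := fun b => ‖f b‖ ^ (2 : ℝ≥0∞).toReal)).mpr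
    (hf.summable (by norm_num))

/-- The linear isometry of `ℓ²` spaces induced by composition with an equivalence of the
index sets. -/
def lpCompEquiv {α β : Type*} (e : α ≃ β) :
    lp (fun _ : β => ℂ) 2 ≃ₗᵢ[ℂ] lp (fun _ : α => ℂ) 2 where
  toFun f := ⟨fun a => f (e a), memℓp_comp_equiv e (lp.memℓp f)⟩
  invFun f := ⟨fun b => f (e.symm b), memℓp_comp_equiv e.symm (lp.memℓp f)⟩
  left_inv f := by apply lp.ext; funext b; simp
  right_inv f := by apply lp.ext; funext a; simp
  map_add' f g := by apply lp.ext; funext a; rfl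
  map_smul' c f := by apply lp.ext; funext a; rfl
  norm_map' f := by
    rw [lp.norm_eq_tsum_rpow (by norm_num), lp.norm_eq_tsum_rpow (by norm_num)]
    congr 1
    exact e.tsum_eq (fun b => ‖f b‖ ^ (2 : ℝ≥0∞).toReal)

/-- The left translation unitary `L g` on `ℓ²(F₂)`, given by `(L g ξ) h = ξ (g⁻¹ * h)`. -/
def L (g : F₂) : l2F₂ →L[ℂ] l2F₂ :=
  (lpCompEquiv ((Equiv.mulLeft g).symm)).toLinearIsometry.toContinuousLinearMap

/-- The right translation unitary `R g` on `ℓ²(F₂)`, given by `(R g ξ) h = ξ (h * g)`. -/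
def R (g : F₂) : l2F₂ →L[ℂ] l2F₂ :=
  (lpCompEquiv (Equiv.mulRight g)).toLinearIsometry.toContinuousLinearMap

@[simp] lemma L_def (g : F₂) (ξ : l2F₂) (h : F₂) : L g ξ h = ξ (g⁻¹ * h) := rfl

@[simp] lemma R_def (g : F₂) (ξ : l2F₂) (h : F₂) : R g ξ h = ξ (h * g) := rfl

namespace FreeGroup
variable {α : Type*} [DecidableEq α]

lemma tail_reduced {x : α × Bool} {w : List (α × Bool)} (h : reduce (x :: w) = x :: w) :
    reduce w = w := by
  rw [reduce.cons] at h
  rcases hr : reduce w with _ | ⟨y, t⟩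
  · rw [hr] at h
    simp only [List.cons.injEq] at h
    exact h.2 ▸ hr
  · rw [hr] at h
    dsimp only at h
    split_ifs at h with hc
    · have h1 : (reduce w).length ≤ w.length := (reduce.red (L := w)).length_le
      rw [hr, h] at h1
      simp at h1
    · rw [List.cons.injEq] at h
      exact h.2

lemma not_cancel_of_reduced {x y : α × Bool} {t : List (α × Bool)}
    (h : reduce (x :: y :: t) = x :: y :: t) : ¬(x.1 = y.1 ∧ x.2 = !y.2) := by
  intro hc
  have ht : reduce (y :: t) = y :: t := tail_reduced h
  rw [reduce.cons, ht] at h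
  dsimp only at h
  rw [if_pos hc] at h
  have := congrArg List.length h
  simp at this
  omega

lemma reduce_append_single {z : α × Bool} {w : List (α × Bool)} (hw : reduce w = w) :
    reduce (w ++ [z]) = w ++ [z] ∨
      (w.getLast? = some (z.1, !z.2) ∧ reduce (w ++ [z]) = w.dropLast) := by
  induction w with
  | nil => left; simp [reduce_singleton]
  | cons x w' ih =>
    have hw' : reduce w' = w' := tail_reduced hw
    have hstep : reduce ((x :: w') ++ [z]) =
        List.casesOn (reduce (w' ++ [z])) [x] fun hd tl =>
          if x.1 = hd.1 ∧ x.2 = !hd.2 then tl else x :: hd :: tl := by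
      rw [show (x :: w') ++ [z] = x :: (w' ++ [z]) from rfl, reduce.cons]
    rcases ih hw' with hA | ⟨hlast, hB⟩
    · rcases w' with _ | ⟨y, t⟩
      · by_cases hc : x.1 = z.1 ∧ x.2 = !z.2
        · right
          constructor
          · simp only [List.getLast?_singleton, Option.some.injEq]
            ext
            · exact hc.1
            · rw [hc.2]
          · rw [hstep]
            simp only [List.nil_append, reduce_singleton]
            rw [if_pos hc]
            rfl
        · left
          rw [hstep]
          simp only [List.nil_append, reduce_singleton]
          rw [if_neg hc]
          rfl
      · left
        have hnc := not_cancel_of_reduced hw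
        rw [hstep, hA]
        rw [show (y :: t) ++ [z] = y :: (t ++ [z]) from rfl]
        dsimp only
        rw [if_neg hnc]
        rfl
    · rcases w' with _ | ⟨y, t⟩
      · simp at hlast
      · right
        refine ⟨by rw [List.getLast?_cons_cons]; exact hlast, ?_⟩
        rw [hstep, hB]
        rcases t with _ | ⟨y₂, t₂⟩
        · simp only [List.getLast?_singleton, Option.some.injEq] at hlast
          simp only [List.dropLast_singleton]
          rfl
        · have hnc := not_cancel_of_reduced hw
          rw [show (y :: y₂ :: t₂).dropLast = y :: (y₂ :: t₂).dropLast from rfl]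
          dsimp only
          rw [if_neg hnc]
          rfl

lemma head_reduce_append {i j : α} (hij : i ≠ j) {w : List (α × Bool)} (hw : reduce w = w)
    (hhead : w.head? ≠ some (i, false)) :
    (reduce (w ++ [(j, false)])).head? ≠ some (i, false) := by
  rcases reduce_append_single (z := (j, false)) hw with hA | ⟨_, hB⟩
  · rw [hA]
    rcases w with _ | ⟨x, w'⟩
    · simpa using fun h => hij h.symm
    · simpa using hhead
  · rw [hB]
    rcases w with _ | ⟨x, w'⟩
    · simp
    · rcases w' with _ | ⟨y, t⟩
      · simp
      · simpa using hhead

lemma head_toWord_conj {i j : α} (hij : i ≠ j) (h : FreeGroup α)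
    (hh : h.toWord.head? ≠ some (i, false)) :
    ((of i) * h * (of j)⁻¹).toWord.head? = some (i, true) := by
  have hw : reduce h.toWord = h.toWord := reduce_toWord h
  have key : (of i) * h * (of j)⁻¹ = mk ((i, true) :: (h.toWord ++ [(j, false)])) := by
    conv_lhs => rw [← mk_toWord (x := h)]
    rw [show (of i : FreeGroup α) = mk [(i, true)] from rfl,
      show (of j : FreeGroup α) = mk [(j, true)] from rfl, inv_mk, mul_mk, mul_mk]
    simp [invRev]
  rw [key, toWord_mk, reduce.cons]
  have hr := head_reduce_append hij hw hh
  rcases hrr : reduce (h.toWord ++ [(j, false)]) with _ | ⟨y, t⟩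
  · simp
  · rw [hrr] at hr
    simp only [List.head?_cons, ne_eq, Option.some.injEq] at hr
    show (if (i, true).1 = y.1 ∧ (i, true).2 = !y.2 then t else (i, true) :: y :: t).head? =
      some (i, true)
    rw [if_neg]
    · simp
    · rintro ⟨h1, h2⟩
      dsimp only at h1 h2
      refine hr ?_
      ext
      · exact h1.symm
      · simp at h2
        rw [← h2]

end FreeGroup

namespace MagajnaAux

lemma summable_norm_sq (f : l2F₂) : Summable (fun h : F₂ => ‖f h‖ ^ 2) := by
  have h := (lp.memℓp f).summable (p := 2) (by norm_num)
  refine h.congr fun h => ?_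
  simp only [ENNReal.toReal_ofNat]
  rw [show ((2:ℝ)) = ((2:ℕ):ℝ) by norm_num, Real.rpow_natCast]

lemma norm_sq_tsum (f : l2F₂) : ‖f‖ ^ 2 = ∑' h, ‖f h‖ ^ 2 := by
  have h := lp.norm_rpow_eq_tsum (p := 2) (by norm_num) f
  simp only [ENNReal.toReal_ofNat] at h
  rw [show ((2:ℝ)) = ((2:ℕ):ℝ) by norm_num] at h
  simpa [Real.rpow_natCast] using h

def φe (i j : Fin 2) : F₂ ≃ F₂ :=
  (Equiv.mulLeft (FreeGroup.of i)).trans (Equiv.mulRight (FreeGroup.of j)⁻¹)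

lemma φe_apply (i j : Fin 2) (h : F₂) :
    φe i j h = FreeGroup.of i * h * (FreeGroup.of j)⁻¹ := rfl

lemma uapp (i j : Fin 2) (ξ : l2F₂) (h : F₂) :
    (L (FreeGroup.of i) * R (FreeGroup.of j)) ξ (φe i j h) = ξ h := by
  rw [ContinuousLinearMap.mul_apply, L_def, R_def, φe_apply]
  congr 1
  group

lemma main_ineq (i j : Fin 2) (hij : i ≠ j) (ξ : l2F₂) :
    ‖ξ‖ ^ 2 ≤ (∑' h : F₂, if h.toWord.head? = some (i, true) then ‖ξ h‖ ^ 2 else 0)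
      + (∑' h : F₂, if h.toWord.head? = some (i, false) then ‖ξ h‖ ^ 2 else 0)
      + 5 * ‖(L (FreeGroup.of i) * R (FreeGroup.of j)) ξ - ξ‖ ^ 2 + ‖ξ‖ ^ 2 / 4 := by
  set u := L (FreeGroup.of i) * R (FreeGroup.of j) with hu
  set φ := φe i j with hφ
  set μ : F₂ → ℝ := fun h => ‖ξ h‖ ^ 2 with hμdef
  have hμ0 : ∀ h, 0 ≤ μ h := fun h => by positivity
  have hμ : Summable μ := summable_norm_sq ξ
  have hμφ : Summable (fun h => μ (φ h)) := by
    refine (φ.summable_iff (f := μ)).mpr hμ |>.congr fun h => rfl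
  -- D h = ‖(u ξ - ξ) (φ h)‖ ^ 2
  set D : F₂ → ℝ := fun h => ‖(u ξ - ξ) (φ h)‖ ^ 2 with hDdef
  have hD : Summable D := by
    refine (φ.summable_iff (f := fun k => ‖(u ξ - ξ) k‖ ^ 2)).mpr
      (summable_norm_sq _) |>.congr fun h => rfl
  have hDsum : (∑' h, D h) = ‖u ξ - ξ‖ ^ 2 := by
    rw [norm_sq_tsum (u ξ - ξ), ← φ.tsum_eq (fun k => ‖(u ξ - ξ) k‖ ^ 2)]
  have ptw : ∀ h, (u ξ - ξ) (φ h) = ξ h - ξ (φ h) := by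
    intro h
    have : (u ξ - ξ) (φ h) = u ξ (φ h) - ξ (φ h) := by
      rw [lp.coeFn_sub, Pi.sub_apply]
    rw [this, uapp]
  -- pointwise key estimate
  have key3 : ∀ h, |μ (φ h) - μ h| ≤ 5 * D h + μ h / 4 := by
    intro h
    have h1 : |‖ξ (φ h)‖ - ‖ξ h‖| ≤ ‖ξ (φ h) - ξ h‖ := abs_norm_sub_norm_le _ _
    have h2 : ‖ξ (φ h) - ξ h‖ ^ 2 = D h := by
      rw [hDdef]
      dsimp only
      rw [ptw h, norm_sub_rev]
    rw [abs_le] at h1 ⊢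
    obtain ⟨h1a, h1b⟩ := h1
    have hx : (0:ℝ) ≤ ‖ξ (φ h)‖ := norm_nonneg _
    have hy : (0:ℝ) ≤ ‖ξ h‖ := norm_nonneg _
    have hd : (0:ℝ) ≤ ‖ξ (φ h) - ξ h‖ := norm_nonneg _
    have e1 : μ (φ h) = ‖ξ (φ h)‖ ^ 2 := rfl
    have e2 : μ h = ‖ξ h‖ ^ 2 := rfl
    constructor <;>
      nlinarith [sq_nonneg (2 * ‖ξ (φ h) - ξ h‖ - ‖ξ h‖ / 2), e1, e2, h2, h1a, h1b, hx, hy, hd]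
  have hA : Summable (fun h : F₂ => if h.toWord.head? = some (i, true) then μ h else 0) := by
    refine Summable.of_nonneg_of_le (fun h => ?_) (fun h => ?_) hμ <;>
      by_cases hc : h.toWord.head? = some (i, true) <;> simp [hc, hμ0 h]
  have hB : Summable (fun h : F₂ => if h.toWord.head? = some (i, false) then μ h else 0) := by
    refine Summable.of_nonneg_of_le (fun h => ?_) (fun h => ?_) hμ <;>
      by_cases hc : h.toWord.head? = some (i, false) <;> simp [hc, hμ0 h]
  have hC : Summable (fun h : F₂ => if h.toWord.head? = some (i, false) then (0:ℝ) else μ h) := by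
    refine Summable.of_nonneg_of_le (fun h => ?_) (fun h => ?_) hμ <;>
      by_cases hc : h.toWord.head? = some (i, false) <;> simp [hc, hμ0 h]
  have hG : Summable (fun h : F₂ => if h.toWord.head? = some (i, false) then (0:ℝ) else μ (φ h)) := by
    refine Summable.of_nonneg_of_le (fun h => ?_) (fun h => ?_) hμφ <;>
      by_cases hc : h.toWord.head? = some (i, false) <;> simp [hc, hμ0 (φ h)]
  have habs : Summable (fun h : F₂ => |μ (φ h) - μ h|) := by
    refine Summable.of_nonneg_of_le (fun h => abs_nonneg _) key3
      ((hD.mul_left 5).add (hμ.div_const 4))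
  have hGs : Summable (fun k : F₂ => if (φ.symm k).toWord.head? = some (i, false)
      then (0:ℝ) else μ k) := by
    refine Summable.of_nonneg_of_le (fun k => ?_) (fun k => ?_) hμ <;>
      by_cases hc : (φ.symm k).toWord.head? = some (i, false) <;> simp [hc, hμ0 k]
  have reindexG : (∑' h : F₂, if h.toWord.head? = some (i, false) then (0:ℝ) else μ (φ h))
      = ∑' k : F₂, if (φ.symm k).toWord.head? = some (i, false) then (0:ℝ) else μ k := by
    rw [← φ.tsum_eq (f := fun k : F₂ =>
      if (φ.symm k).toWord.head? = some (i, false) then (0:ℝ) else μ k)]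
    exact tsum_congr fun h => by rw [φ.symm_apply_apply]
  have step1 : (∑' h : F₂, if h.toWord.head? = some (i, false) then (0:ℝ) else μ (φ h))
      ≤ ∑' h : F₂, if h.toWord.head? = some (i, true) then μ h else 0 := by
    rw [reindexG]
    refine Summable.tsum_le_tsum (fun k => ?_) hGs hA
    by_cases hc : (φ.symm k).toWord.head? = some (i, false)
    · by_cases hc2 : k.toWord.head? = some (i, true) <;> simp [hc, hc2, hμ0 k]
    · have hk : k.toWord.head? = some (i, true) := by
        have hw := FreeGroup.head_toWord_conj hij (φ.symm k) hc
        rw [← φe_apply, ← hφ, φ.apply_symm_apply] at hw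
        exact hw
      simp [hc, hk]
  have step2 : (∑' h : F₂, if h.toWord.head? = some (i, false) then (0:ℝ) else μ h)
      ≤ (∑' h : F₂, if h.toWord.head? = some (i, false) then (0:ℝ) else μ (φ h))
        + ∑' h : F₂, |μ (φ h) - μ h| := by
    rw [← Summable.tsum_add hG habs]
    refine Summable.tsum_le_tsum (fun h => ?_) hC (hG.add habs)
    by_cases hc : h.toWord.head? = some (i, false)
    · simp [hc, abs_nonneg]
    · simp only [if_neg hc]
      have h3 : μ h - μ (φ h) ≤ |μ (φ h) - μ h| := by
        rw [abs_sub_comm]; exact le_abs_self _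
      linarith
  have step3 : (∑' h : F₂, if h.toWord.head? = some (i, false) then μ h else 0)
      + (∑' h : F₂, if h.toWord.head? = some (i, false) then (0:ℝ) else μ h) = ‖ξ‖ ^ 2 := by
    rw [← Summable.tsum_add hB hC, norm_sq_tsum ξ]
    exact tsum_congr fun h => by
      by_cases hc : h.toWord.head? = some (i, false) <;>
        simp [hc, hμdef]
  have step4 : (∑' h : F₂, |μ (φ h) - μ h|) ≤ 5 * ‖u ξ - ξ‖ ^ 2 + ‖ξ‖ ^ 2 / 4 := by
    have hb : Summable (fun h : F₂ => 5 * D h + μ h / 4) :=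
      (hD.mul_left 5).add (hμ.div_const 4)
    have h5 := Summable.tsum_le_tsum key3 habs hb
    rw [Summable.tsum_add (hD.mul_left 5) (hμ.div_const 4), tsum_mul_left, hDsum,
      tsum_div_const, ← norm_sq_tsum ξ] at h5
    exact h5
  linarith [step1, step2, step3, step4]


lemma sum_four (ξ : l2F₂) :
    (∑' h : F₂, if h.toWord.head? = some ((0:Fin 2), true) then ‖ξ h‖ ^ 2 else 0)
      + (∑' h : F₂, if h.toWord.head? = some ((0:Fin 2), false) then ‖ξ h‖ ^ 2 else 0)
      + (∑' h : F₂, if h.toWord.head? = some ((1:Fin 2), true) then ‖ξ h‖ ^ 2 else 0)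
      + (∑' h : F₂, if h.toWord.head? = some ((1:Fin 2), false) then ‖ξ h‖ ^ 2 else 0)
      ≤ ‖ξ‖ ^ 2 := by
  have hμ : Summable (fun h : F₂ => ‖ξ h‖ ^ 2) := summable_norm_sq ξ
  have hμ0 : ∀ h : F₂, (0:ℝ) ≤ ‖ξ h‖ ^ 2 := fun h => by positivity
  have hs : ∀ (i : Fin 2) (b : Bool), Summable
      (fun h : F₂ => if h.toWord.head? = some (i, b) then ‖ξ h‖ ^ 2 else 0) := by
    intro i b
    refine Summable.of_nonneg_of_le (fun h => ?_) (fun h => ?_) hμ <;>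
      by_cases hc : h.toWord.head? = some (i, b) <;> simp [hc, hμ0 h]
  rw [norm_sq_tsum ξ, ← Summable.tsum_add (hs 0 true) (hs 0 false),
    ← Summable.tsum_add ((hs 0 true).add (hs 0 false)) (hs 1 true),
    ← Summable.tsum_add (((hs 0 true).add (hs 0 false)).add (hs 1 true)) (hs 1 false)]
  refine Summable.tsum_le_tsum (fun h => ?_) ((((hs 0 true).add (hs 0 false)).add (hs 1 true)).add
    (hs 1 false)) hμ
  rcases hh : h.toWord.head? with _ | ⟨⟨i0, b⟩⟩
  · simp [hh, hμ0 h]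
  · fin_cases i0 <;> cases b <;> simp [hh, hμ0 h]

open scoped ComplexInnerProductSpace in
lemma four_vec (a b c d : l2F₂) :
    ‖a + b + c + d‖ ^ 2 + ‖b - a‖ ^ 2 + ‖d - a‖ ^ 2 ≤
      4 * (‖a‖ ^ 2 + ‖b‖ ^ 2 + ‖c‖ ^ 2 + ‖d‖ ^ 2) := by
  have e1 : ‖a + b + c + d‖ ^ 2 = ‖a‖^2 + ‖b‖^2 + ‖c‖^2 + ‖d‖^2
      + 2 * RCLike.re ⟪a, b⟫ + 2 * RCLike.re ⟪a, c⟫ + 2 * RCLike.re ⟪a, d⟫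
      + 2 * RCLike.re ⟪b, c⟫ + 2 * RCLike.re ⟪b, d⟫ + 2 * RCLike.re ⟪c, d⟫ := by
    simp only [@norm_add_sq ℂ, inner_add_left, inner_add_right, map_add]
    ring
  have e2 : ‖b - a‖ ^ 2 = ‖b‖^2 - 2 * RCLike.re ⟪a, b⟫ + ‖a‖^2 := by
    rw [@norm_sub_sq ℂ]
    rw [inner_re_symm a b]
  have e3 : ‖d - a‖ ^ 2 = ‖d‖^2 - 2 * RCLike.re ⟪a, d⟫ + ‖a‖^2 := by
    rw [@norm_sub_sq ℂ]
    rw [inner_re_symm a d]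
  have hac : RCLike.re ⟪a, c⟫ ≤ ‖a‖ * ‖c‖ := re_inner_le_norm a c
  have hbc : RCLike.re ⟪b, c⟫ ≤ ‖b‖ * ‖c‖ := re_inner_le_norm b c
  have hbd : RCLike.re ⟪b, d⟫ ≤ ‖b‖ * ‖d‖ := re_inner_le_norm b d
  have hcd : RCLike.re ⟪c, d⟫ ≤ ‖c‖ * ‖d‖ := re_inner_le_norm c d
  nlinarith [sq_nonneg (‖a‖ - ‖c‖), sq_nonneg (‖b‖ - ‖c‖), sq_nonneg (‖b‖ - ‖d‖),
    sq_nonneg (‖c‖ - ‖d‖)]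

lemma norm_LR (g g' : F₂) (ξ : l2F₂) : ‖(L g * R g') ξ‖ = ‖ξ‖ := by
  rw [ContinuousLinearMap.mul_apply]
  simp only [L, R, LinearIsometry.coe_toContinuousLinearMap, LinearIsometry.norm_map]

end MagajnaAux

open MagajnaAux

/-- The quantitative content of Example 2.6 of Magajna, "Pointwise approximation by elementary
complete contractions": the operator `T₂ = 1 + L_{g₁}R_{g₂} + L_{g₁⁻¹}R_{g₂⁻¹} + L_{g₂}R_{g₁}`
on `ℓ²(F₂)` has operator norm at most `4 - 1/784`. -/
theorem norm_one_add_mixed_translations_le :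
    ‖(1 : l2F₂ →L[ℂ] l2F₂) + L g₁ * R g₂ + L g₁⁻¹ * R g₂⁻¹ + L g₂ * R g₁‖ ≤ 4 - 1 / 784 := by
  refine ContinuousLinearMap.opNorm_le_bound _ (by norm_num) fun ξ => ?_
  have hTApp : (1 + L g₁ * R g₂ + L g₁⁻¹ * R g₂⁻¹ + L g₂ * R g₁) ξ
      = ξ + (L g₁ * R g₂) ξ + (L g₁⁻¹ * R g₂⁻¹) ξ + (L g₂ * R g₁) ξ := by
    simp [ContinuousLinearMap.add_apply]
  rw [hTApp]
  have h4 := four_vec ξ ((L g₁ * R g₂) ξ) ((L g₁⁻¹ * R g₂⁻¹) ξ) ((L g₂ * R g₁) ξ)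
  have n1 : ‖(L g₁ * R g₂) ξ‖ = ‖ξ‖ := norm_LR _ _ _
  have n2 : ‖(L g₁⁻¹ * R g₂⁻¹) ξ‖ = ‖ξ‖ := norm_LR _ _ _
  have n3 : ‖(L g₂ * R g₁) ξ‖ = ‖ξ‖ := norm_LR _ _ _
  have key1 := main_ineq 0 1 (by decide) ξ
  have key2 := main_ineq 1 0 (by decide) ξ
  have e01 : L (FreeGroup.of 0) * R (FreeGroup.of 1) = L g₁ * R g₂ := rfl
  have e10 : L (FreeGroup.of 1) * R (FreeGroup.of 0) = L g₂ * R g₁ := rfl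
  rw [e01] at key1
  rw [e10] at key2
  have hsum := sum_four ξ
  have hN : (0:ℝ) ≤ ‖ξ‖ := norm_nonneg ξ
  have hkey : ‖ξ‖ ^ 2 ≤ 10 * (‖(L g₁ * R g₂) ξ - ξ‖ ^ 2 + ‖(L g₂ * R g₁) ξ - ξ‖ ^ 2) := by
    linarith [key1, key2, hsum]
  have hpos : (0:ℝ) ≤ (4 - 1 / 784) * ‖ξ‖ := by positivity
  refine le_of_pow_le_pow_left₀ two_ne_zero hpos ?_
  rw [n1, n2, n3] at h4
  nlinarith [h4, hkey, sq_nonneg ‖ξ‖, norm_nonneg ((L g₁ * R g₂) ξ - ξ),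
    norm_nonneg ((L g₂ * R g₁) ξ - ξ)]

end
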